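/- Let z ∈ ℂⁿ with ‖z‖ = 1, let x̃₀ ∈ ℂⁿ be a unit vector with |x̃₀* z|² ≥ 1 − θ, and let λ > 0 satisfy |λ² − 1| ≤ θ, where 0 < θ ≤ 1. Set x₀ = λ x̃₀. Then dist(x₀, z)² := min over φ ∈ [0, 2π) of ‖z − e^{iφ} x₀‖² satisfies dist(x₀, z)² ≤ 3θ. -/

import Mathlib

/-- If `‖z‖ = 1`, `x̃₀` is a unit vector with `|x̃₀* z|² ≥ 1 − θ` and `|λ² − 1| ≤ θ`
with `0 < θ ≤ 1`, `λ > 0`, then `x₀ = λ x̃₀` satisfies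
`dist(x₀, z)² = min_{φ ∈ [0,2π)} ‖z − e^{iφ}x₀‖² ≤ 3θ`. -/
theorem initialization_distance_bound {n : ℕ}
    (z x0t : EuclideanSpace ℂ (Fin n)) (hz : ‖z‖ = 1) (hx0t : ‖x0t‖ = 1)
    (θ lam : ℝ) (hθ0 : 0 < θ) (hθ1 : θ ≤ 1) (hlam : 0 < lam)
    (hcorr : 1 - θ ≤ ‖∑ k, (starRingEnd ℂ) (x0t k) * z k‖^2)
    (hl : |lam^2 - 1| ≤ θ) :
    sInf {d : ℝ | ∃ φ ∈ Set.Ico (0:ℝ) (2*Real.pi),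
        d = ‖z - Complex.exp (φ * Complex.I) • (lam • x0t)‖^2} ≤ 3*θ := by
  set a : ℂ := ∑ k, (starRingEnd ℂ) (x0t k) * z k with ha
  set φ : ℝ := if a.arg < 0 then a.arg + 2*Real.pi else a.arg with hφ
  have hπ := Real.pi_pos
  have hφmem : φ ∈ Set.Ico (0:ℝ) (2*Real.pi) := by
    have h1 := Complex.neg_pi_lt_arg a
    have h2 := Complex.arg_le_pi a
    rw [hφ]; split_ifs with h <;> constructor <;> nlinarith
  have hexp : Complex.exp (φ * Complex.I) = Complex.exp (a.arg * Complex.I) := by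
    rw [hφ]; split_ifs with h
    · push_cast
      rw [add_mul, Complex.exp_add]
      have : (2:ℂ) * Real.pi * Complex.I = 2 * Real.pi * Complex.I := rfl
      rw [Complex.exp_two_pi_mul_I, mul_one]
    · rfl
  have hbdd : BddBelow {d : ℝ | ∃ φ ∈ Set.Ico (0:ℝ) (2*Real.pi),
      d = ‖z - Complex.exp (φ * Complex.I) • (lam • x0t)‖^2} := by
    refine ⟨0, fun x hx => ?_⟩
    obtain ⟨ψ, _, rfl⟩ := hx
    positivity
  have hmem : ‖z - Complex.exp (φ * Complex.I) • (lam • x0t)‖^2 ∈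
      {d : ℝ | ∃ φ ∈ Set.Ico (0:ℝ) (2*Real.pi),
        d = ‖z - Complex.exp (φ * Complex.I) • (lam • x0t)‖^2} := ⟨φ, hφmem, rfl⟩
  refine le_trans (csInf_le hbdd hmem) ?_
  -- rewrite the vector
  have hvec : Complex.exp (φ * Complex.I) • (lam • x0t)
      = (Complex.exp (a.arg * Complex.I) * (lam:ℂ)) • x0t := by
    rw [hexp, ← Complex.coe_smul, smul_smul]
  rw [hvec]
  set c : ℂ := Complex.exp (a.arg * Complex.I) * (lam:ℂ) with hc
  have habsc : ‖c‖ = lam := by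
    rw [hc, norm_mul, Complex.norm_exp_ofReal_mul_I]
    simp [abs_of_pos hlam]
  have hnormw : ‖c • x0t‖ = lam := by
    rw [norm_smul, hx0t, mul_one]
    exact habsc
  have hinner : (inner ℂ z (c • x0t) : ℂ) = (lam * ‖a‖ : ℝ) := by
    rw [inner_smul_right]
    have hza : (inner ℂ z x0t : ℂ) = (starRingEnd ℂ) a := by
      rw [ha, map_sum]
      simp [PiLp.inner_apply, RCLike.inner_apply, mul_comm]
    rw [hza, hc]
    have key : Complex.exp (a.arg * Complex.I) * (starRingEnd ℂ) a
        = (‖a‖ : ℂ) := by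
      conv_lhs => rw [← Complex.norm_mul_exp_arg_mul_I a]
      rw [map_mul, ← Complex.exp_conj]
      simp only [Complex.conj_ofReal, map_neg, map_mul, Complex.conj_I, mul_neg]
      rw [mul_comm, mul_assoc, ← Complex.exp_add]
      simp
    push_cast
    calc Complex.exp (a.arg * Complex.I) * (lam:ℂ) * (starRingEnd ℂ) a
        = (lam:ℂ) * (Complex.exp (a.arg * Complex.I) * (starRingEnd ℂ) a) := by ring
      _ = (lam:ℂ) * (‖a‖ : ℂ) := by rw [key]
  have hexpand : ‖z - c • x0t‖^2 = 1 - 2 * (lam * ‖a‖) + lam^2 := by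
    rw [@norm_sub_sq ℂ _ _ _ _ z (c • x0t), hz, hnormw, hinner]
    simp
  rw [hexpand]
  have h1 : lam^2 ≤ 1 + θ := by cases abs_le.1 hl; linarith
  have h2 : 1 - θ ≤ lam^2 := by cases abs_le.1 hl; linarith
  have habs0 : 0 ≤ ‖a‖ := norm_nonneg a
  nlinarith [mul_le_mul h2 hcorr (by linarith) (sq_nonneg lam),
    mul_nonneg hlam.le habs0, sq_nonneg (lam * ‖a‖ - (1 - θ))]
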